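/- Let Y be a finite nonempty type, let n be a natural number, let L ≥ 0, and let p : Y → ℝⁿ → ℝ be such that: p y θ > 0 for all y and θ, Σ_y p y θ = 1 for all θ, and for each y the function θ ↦ log (p y θ) is differentiable on ℝⁿ with L-Lipschitz gradient. Then for all θ₀, θ₁ ∈ ℝⁿ, D(p(·, θ₀) ‖ p(·, θ₁)) ≤ (L/2)·‖θ₁ − θ₀‖². -/

import Mathlib

open Real Set

private lemma inner_gradient_eq {n : ℕ} (f : EuclideanSpace ℝ (Fin n) → ℝ)
    (x v : EuclideanSpace ℝ (Fin n)) :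
    (inner ℝ (gradient f x) v : ℝ) = fderiv ℝ f x v := by
  have : InnerProductSpace.toDual ℝ _ (gradient f x) = fderiv ℝ f x := by
    simp [gradient]
  rw [← this, InnerProductSpace.toDual_apply_apply]

/-- Descent lemma for L-smooth functions. -/
private lemma descent_lemma {n : ℕ} {L : ℝ} (hL : 0 ≤ L)
    (f : EuclideanSpace ℝ (Fin n) → ℝ) (hd : Differentiable ℝ f)
    (hl : LipschitzWith ⟨L, hL⟩ (fun θ => gradient f θ))
    (x y : EuclideanSpace ℝ (Fin n)) :
    f x - f y ≤ -(inner ℝ (gradient f x) (y - x) : ℝ) + L / 2 * ‖y - x‖ ^ 2 := by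
  set v := y - x with hv
  set φ : ℝ → ℝ := fun t =>
    f (x + t • v) - t * (inner ℝ (gradient f x) v : ℝ) + L / 2 * t ^ 2 * ‖v‖ ^ 2 with hφ
  have hline : ∀ t : ℝ, HasDerivAt (fun s : ℝ => x + s • v) v t := by
    intro t
    simpa using ((hasDerivAt_id t).smul_const v).const_add x
  have hder : ∀ t : ℝ, HasDerivAt φ
      ((inner ℝ (gradient f (x + t • v)) v : ℝ) - (inner ℝ (gradient f x) v : ℝ)
        + L * t * ‖v‖ ^ 2) t := by
    intro t
    have h1 : HasDerivAt (fun s : ℝ => f (x + s • v))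
        (fderiv ℝ f (x + t • v) v) t :=
      (hd (x + t • v)).hasFDerivAt.comp_hasDerivAt t (hline t)
    rw [← inner_gradient_eq f (x + t • v) v] at h1
    have h2 : HasDerivAt (fun s : ℝ => s * (inner ℝ (gradient f x) v : ℝ))
        ((inner ℝ (gradient f x) v : ℝ)) t := by
      simpa using (hasDerivAt_id t).mul_const (inner ℝ (gradient f x) v : ℝ)
    have h3 : HasDerivAt (fun s : ℝ => L / 2 * s ^ 2 * ‖v‖ ^ 2)
        (L * t * ‖v‖ ^ 2) t := by
      have := ((hasDerivAt_pow 2 t).const_mul (L / 2)).mul_const (‖v‖ ^ 2)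
      exact this.congr_deriv (by have h21 : (2:ℕ) - 1 = 1 := rfl; rw [h21, pow_one]; push_cast; ring)
    exact (h1.sub h2).add h3
  have hanti : MonotoneOn φ (Icc (0 : ℝ) 1) := by
    apply monotoneOn_of_deriv_nonneg (convex_Icc 0 1)
    · exact fun t _ => ((hder t).differentiableAt).continuousAt.continuousWithinAt
    · intro t ht
      exact ((hder t).differentiableAt).differentiableWithinAt
    · intro t ht
      rw [interior_Icc] at ht
      rw [(hder t).deriv]
      have hb : (inner ℝ (gradient f x) v : ℝ)
          - (inner ℝ (gradient f (x + t • v)) v : ℝ) ≤ L * t * ‖v‖ ^ 2 := by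
        have : (inner ℝ (gradient f x) v : ℝ)
            - (inner ℝ (gradient f (x + t • v)) v : ℝ)
            = (inner ℝ (gradient f x - gradient f (x + t • v)) v : ℝ) := by
          rw [inner_sub_left]
        rw [this]
        calc (inner ℝ (gradient f x - gradient f (x + t • v)) v : ℝ)
            ≤ ‖gradient f x - gradient f (x + t • v)‖ * ‖v‖ :=
              real_inner_le_norm _ _
          _ ≤ (L * ‖t • v‖) * ‖v‖ := by
              gcongr
              have := hl.dist_le_mul x (x + t • v)
              rw [dist_eq_norm, dist_eq_norm, norm_sub_rev x, add_sub_cancel_left] at this; exact this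
          _ = L * t * ‖v‖ ^ 2 := by
              rw [norm_smul, Real.norm_eq_abs, abs_of_pos ht.1]
              ring
      linarith
  have key := hanti (Set.left_mem_Icc.2 zero_le_one) (Set.right_mem_Icc.2 zero_le_one)
    zero_le_one
  have h0 : x + (0:ℝ) • v = x := by simp
  have h1 : x + (1:ℝ) • v = y := by simp [hv]
  simp only [hφ, h0, h1, one_mul, zero_mul, one_pow] at key
  set c : ℝ := inner ℝ (gradient f x) v with hc
  linarith

/-- quadratic KL bound under L-smooth log-policy: if each
`θ ↦ log (p y θ)` is differentiable with `L`-Lipschitz gradient, `p y θ > 0`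
everywhere, and `Σ_y p y θ = 1` for all `θ`, then
`D(p(·,θ₀) ‖ p(·,θ₁)) ≤ (L/2)·‖θ₁ − θ₀‖²`. -/
theorem kl_smoothness_bound
    {Y : Type*} [Fintype Y] [Nonempty Y] (n : ℕ)
    (L : ℝ) (hL : 0 ≤ L)
    (p : Y → EuclideanSpace ℝ (Fin n) → ℝ)
    (hpos : ∀ y θ, 0 < p y θ)
    (hsum : ∀ θ, ∑ y, p y θ = 1)
    (hdiff : ∀ y, Differentiable ℝ (fun θ => Real.log (p y θ)))
    (hlip : ∀ y, LipschitzWith ⟨L, hL⟩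
      (fun θ => gradient (fun θ' => Real.log (p y θ')) θ))
    (θ₀ θ₁ : EuclideanSpace ℝ (Fin n)) :
    ∑ y, p y θ₀ * Real.log (p y θ₀ / p y θ₁) ≤ (L / 2) * ‖θ₁ - θ₀‖ ^ 2 := by
  set v := θ₁ - θ₀ with hv
  set D : Y → EuclideanSpace ℝ (Fin n) →L[ℝ] ℝ :=
    fun y => fderiv ℝ (fun θ => Real.log (p y θ)) θ₀ with hD
  have hdesc : ∀ y, Real.log (p y θ₀) - Real.log (p y θ₁) ≤
      -(D y v) + L / 2 * ‖v‖ ^ 2 := by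
    intro y
    have := descent_lemma hL (fun θ => Real.log (p y θ)) (hdiff y) (hlip y) θ₀ θ₁
    rwa [inner_gradient_eq] at this
  -- zero-mean score
  have hp : ∀ y, HasFDerivAt (p y) (p y θ₀ • D y) θ₀ := by
    intro y
    have h1 : HasFDerivAt (fun θ => Real.log (p y θ)) (D y) θ₀ :=
      ((hdiff y) θ₀).hasFDerivAt
    have h2 := (Real.hasDerivAt_exp (Real.log (p y θ₀))).comp_hasFDerivAt θ₀ h1
    have heq : (fun θ => Real.exp (Real.log (p y θ))) = p y :=
      funext fun θ => Real.exp_log (hpos y θ)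
    rw [Function.comp_def, heq, Real.exp_log (hpos y θ₀)] at h2
    exact h2
  have hsumD : HasFDerivAt (fun θ => ∑ y, p y θ) (∑ y, p y θ₀ • D y) θ₀ :=
    HasFDerivAt.fun_sum (fun y _ => hp y)
  have hconst : HasFDerivAt (fun θ => ∑ y, p y θ)
      (0 : EuclideanSpace ℝ (Fin n) →L[ℝ] ℝ) θ₀ := by
    have : (fun θ => ∑ y, p y θ) = fun _ => (1 : ℝ) := funext hsum
    rw [this]; exact hasFDerivAt_const 1 θ₀
  have hzero : (∑ y, p y θ₀ • D y) = 0 := hsumD.unique hconst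
  have hzero' : ∑ y, p y θ₀ * D y v = 0 := by
    have := congrArg (fun (T : EuclideanSpace ℝ (Fin n) →L[ℝ] ℝ) => T v) hzero
    simpa using this
  calc ∑ y, p y θ₀ * Real.log (p y θ₀ / p y θ₁)
      = ∑ y, p y θ₀ * (Real.log (p y θ₀) - Real.log (p y θ₁)) := by
        refine Finset.sum_congr rfl fun y _ => ?_
        rw [Real.log_div (hpos y θ₀).ne' (hpos y θ₁).ne']
    _ ≤ ∑ y, p y θ₀ * (-(D y v) + L / 2 * ‖v‖ ^ 2) :=
        Finset.sum_le_sum fun y _ =>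
          mul_le_mul_of_nonneg_left (hdesc y) (hpos y θ₀).le
    _ = -(∑ y, p y θ₀ * D y v) + (∑ y, p y θ₀) * (L / 2 * ‖v‖ ^ 2) := by
        rw [Finset.sum_mul, ← Finset.sum_neg_distrib, ← Finset.sum_add_distrib]
        refine Finset.sum_congr rfl fun y _ => ?_
        ring
    _ = (L / 2) * ‖v‖ ^ 2 := by rw [hzero', hsum θ₀]; ring
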